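/- arXiv:2505.11335 — 3 statements merged into one kernel-verified Lean document; each statement's English description precedes it below -/
import Mathlib

section
/- (Theorem 1) Let c ≥ 1, d ≥ 1, let h, h' : Fin d → ℝ, W : Fin d → Fin c → ℝ, y, s : Fin c → ℝ, and let η > 0, λ > 0 with η·λ < 1. Set τ = 1/(1 − η·λ), b i = ⟨W_i, h'⟩ where W_i is the i-th column of W and ⟨·,·⟩ is the Euclidean inner product, and ψ i j = exp( η·(s i − y i − s j + y j)·⟨h, h'⟩ ). Define the one-step gradient update W' a i = (1 − η·λ)·(W a i) − η·(s i − y i)·(h a), the updated logits z' i = ∑_a (W' a i)·(h' a), and the updated probabilities s' i = exp(z' i)/∑_k exp(z' k). Then for every index i, s' i = exp(b i / τ) / ( exp(b i / τ) + ∑_{j ≠ i} exp(b j / τ) · (ψ i j) ). -/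
/-- Theorem 1: With `τ = 1/(1 - η·λ)`, `b i = ⟨W_i, h'⟩`,
`ψ i j = exp (η·(s i - y i - s j + y j)·⟨h, h'⟩)`, one-step gradient update
`W' a i = (1 - η·λ)·(W a i) - η·(s i - y i)·(h a)`, updated logits
`z' i = ∑ a, W' a i * h' a` and updated probabilities `s' = softmax z'`, one has
`s' i = exp (b i / τ) / (exp (b i / τ) + ∑_{j ≠ i} exp (b j / τ) * ψ i j)`. -/
theorem updated_probabilities_tempered_softmax (c d : ℕ) (hc : 1 ≤ c) (hd : 1 ≤ d)
    (h h' : Fin d → ℝ) (W : Fin d → Fin c → ℝ) (y s : Fin c → ℝ)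
    (η lam : ℝ) (hη : 0 < η) (hlam : 0 < lam) (hetalam : η * lam < 1)
    (τ : ℝ) (hτ : τ = 1 / (1 - η * lam))
    (b : Fin c → ℝ) (hb : ∀ i, b i = ∑ a, W a i * h' a)
    (ψ : Fin c → Fin c → ℝ)
    (hψ : ∀ i j, ψ i j = Real.exp (η * (s i - y i - s j + y j) * ∑ a, h a * h' a))
    (W' : Fin d → Fin c → ℝ)
    (hW' : ∀ a i, W' a i = (1 - η * lam) * W a i - η * (s i - y i) * h a)
    (z' : Fin c → ℝ) (hz' : ∀ i, z' i = ∑ a, W' a i * h' a)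
    (s' : Fin c → ℝ) (hs' : ∀ i, s' i = Real.exp (z' i) / ∑ k, Real.exp (z' k))
    (i : Fin c) :
    s' i = Real.exp (b i / τ) /
      (Real.exp (b i / τ) + ∑ j ∈ Finset.univ.erase i, Real.exp (b j / τ) * ψ i j) := by
  have hpos : 0 < 1 - η * lam := by nlinarith
  set P : ℝ := ∑ a, h a * h' a with hP
  have hdiv : ∀ k, b k / τ = (1 - η * lam) * b k := by
    intro k
    rw [hτ, div_div_eq_mul_div, div_one, mul_comm]
  have hzb : ∀ k, z' k = (1 - η * lam) * b k - η * (s k - y k) * P := by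
    intro k
    have key : ∀ a, W' a k * h' a
        = (1 - η * lam) * (W a k * h' a) - η * (s k - y k) * (h a * h' a) := by
      intro a; rw [hW']; ring
    rw [hz', hb]
    simp only [key]
    rw [Finset.sum_sub_distrib, ← Finset.mul_sum, ← Finset.mul_sum]
  have hEi : ∀ k, Real.exp (b k / τ) * ψ i k
      = Real.exp (z' k) * Real.exp (η * (s i - y i) * P) := by
    intro k
    rw [hψ, hdiv, hzb, ← Real.exp_add, ← Real.exp_add]
    congr 1; ring
  have hEii : Real.exp (b i / τ) = Real.exp (z' i) * Real.exp (η * (s i - y i) * P) := by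
    rw [hdiv, hzb, ← Real.exp_add]
    congr 1; ring
  have hden : Real.exp (b i / τ) + ∑ j ∈ Finset.univ.erase i, Real.exp (b j / τ) * ψ i j
      = (∑ k, Real.exp (z' k)) * Real.exp (η * (s i - y i) * P) := by
    rw [hEii]
    simp only [hEi]
    rw [← Finset.sum_mul, ← add_mul,
      Finset.add_sum_erase Finset.univ (fun k => Real.exp (z' k)) (Finset.mem_univ i)]
  have hDpos : 0 < ∑ k, Real.exp (z' k) := by
    apply Finset.sum_pos (fun k _ => Real.exp_pos _)
    exact ⟨i, Finset.mem_univ i⟩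
  rw [hs', hden, hEii, mul_div_mul_right _ _ (Real.exp_ne_zero _)]
end

section
/- Let c ≥ 2 and let z : Fin c → ℝ be a non-constant vector (there exist i, j with z i ≠ z j). For τ > 0, define the tempered softmax s(τ) i = exp(z i / τ) / ∑_k exp(z k / τ) and its Shannon entropy H(τ) = −∑_i s(τ) i · log(s(τ) i). Then H is strictly monotonically increasing on (0, ∞): for all 0 < τ₁ < τ₂, H(τ₁) < H(τ₂). -/
open Real Finset

/-- For a non-constant logit vector `z`, the Shannon entropy of the
tempered softmax `s τ i = exp (z i / τ) / ∑ k, exp (z k / τ)` is strictly increasing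
in the temperature `τ` on `(0, ∞)`. -/
theorem tempered_softmax_entropy_strictMono (c : ℕ) (hc : 2 ≤ c) (z : Fin c → ℝ)
    (hz : ∃ i j, z i ≠ z j)
    (s : ℝ → Fin c → ℝ)
    (hs : ∀ τ i, s τ i = Real.exp (z i / τ) / ∑ k, Real.exp (z k / τ))
    (H : ℝ → ℝ) (hH : ∀ τ, H τ = -∑ i, s τ i * Real.log (s τ i))
    (τ₁ τ₂ : ℝ) (h1 : 0 < τ₁) (h12 : τ₁ < τ₂) :
    H τ₁ < H τ₂ := by
  set Z : ℝ → ℝ := fun β => ∑ k, Real.exp (β * z k) with hZ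
  have hZpos : ∀ β, 0 < Z β := by
    intro β
    apply Finset.sum_pos (fun i _ => Real.exp_pos _)
    exact Finset.univ_nonempty_iff.2 ⟨⟨0, by omega⟩⟩
  set A : ℝ → ℝ := fun β => Real.log (Z β) with hA
  set E : ℝ → ℝ := fun β => ∑ i, (Real.exp (β * z i) / Z β) * z i with hE
  -- key tangent-line inequality from strict Jensen
  have key : ∀ β β' : ℝ, β ≠ β' → A β + (β' - β) * E β < A β' := by
    intro β β' hne
    set t := β' - β with ht
    have htne : t ≠ 0 := sub_ne_zero.2 (Ne.symm hne)
    set p : Fin c → ℝ := fun i => Real.exp (β * z i) / Z β with hp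
    have hp0 : ∀ i, 0 < p i := fun i => div_pos (Real.exp_pos _) (hZpos β)
    have hp1 : ∑ i, p i = 1 := by
      rw [hp]
      rw [← Finset.sum_div]
      exact div_self (ne_of_gt (hZpos β))
    obtain ⟨j, k, hjk⟩ := hz
    have jensen := strictConvexOn_exp.map_sum_lt (t := Finset.univ)
      (w := p) (p := fun i => t * z i) (fun i _ => hp0 i) hp1
      (fun i _ => Set.mem_univ _)
      ⟨j, Finset.mem_univ _, k, Finset.mem_univ _, by
        intro h
        exact hjk (mul_left_cancel₀ htne h)⟩
    simp only [smul_eq_mul] at jensen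
    have hsum1 : ∑ i, p i * (t * z i) = t * E β := by
      rw [hE, Finset.mul_sum]
      refine Finset.sum_congr rfl fun i _ => by ring
    have hsum2 : ∑ i, p i * Real.exp (t * z i) = Z β' / Z β := by
      rw [hZ, Finset.sum_div]
      refine Finset.sum_congr rfl fun i _ => ?_
      rw [hp, div_mul_eq_mul_div, ← Real.exp_add]
      congr 2
      ring
    rw [hsum1, hsum2] at jensen
    have := Real.log_lt_log (Real.exp_pos _) jensen
    rw [Real.log_exp, Real.log_div (ne_of_gt (hZpos β')) (ne_of_gt (hZpos β))] at this
    rw [hA]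
    linarith
  -- entropy in terms of A and E
  have hHrw : ∀ τ : ℝ, 0 < τ → H τ = A (1/τ) - (1/τ) * E (1/τ) := by
    intro τ hτ
    have hτne : τ ≠ 0 := ne_of_gt hτ
    have hsrw : ∀ i, s τ i = Real.exp ((1/τ) * z i) / Z (1/τ) := by
      intro i
      rw [hs, hZ]
      congr 1
      · rw [one_div, inv_mul_eq_div]
      · refine Finset.sum_congr rfl fun k _ => ?_
        rw [one_div, inv_mul_eq_div]
    have hlog : ∀ i, Real.log (s τ i) = (1/τ) * z i - A (1/τ) := by
      intro i
      rw [hsrw, Real.log_div (Real.exp_ne_zero _) (ne_of_gt (hZpos _)), Real.log_exp, hA]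
    have hssum : ∑ i, s τ i = 1 := by
      have : ∀ i, s τ i = Real.exp ((1/τ) * z i) / Z (1/τ) := hsrw
      rw [Finset.sum_congr rfl fun i _ => this i, ← Finset.sum_div]
      exact div_self (ne_of_gt (hZpos _))
    rw [hH]
    have : ∑ i, s τ i * Real.log (s τ i)
        = ∑ i, ((1/τ) * (s τ i * z i) - A (1/τ) * s τ i) :=
      Finset.sum_congr rfl fun i _ => by rw [hlog i]; ring
    rw [this, Finset.sum_sub_distrib, ← Finset.mul_sum, ← Finset.mul_sum, hssum, hE]
    have : ∑ i, s τ i * z i = ∑ i, Real.exp ((1/τ) * z i) / Z (1/τ) * z i :=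
      Finset.sum_congr rfl fun i _ => by rw [hsrw]
    rw [this]
    ring
  have h2 : 0 < τ₂ := lt_trans h1 h12
  set β₁ := 1/τ₁ with hβ₁
  set β₂ := 1/τ₂ with hβ₂
  have hb2pos : 0 < β₂ := by positivity
  have hb21 : β₂ < β₁ := by
    rw [hβ₁, hβ₂]
    exact one_div_lt_one_div_of_lt h1 h12
  have hne : β₁ ≠ β₂ := ne_of_gt hb21
  have k1 := key β₁ β₂ hne
  have k2 := key β₂ β₁ hne.symm
  rw [hHrw τ₁ h1, hHrw τ₂ (lt_trans h1 h12), ← hβ₁, ← hβ₂]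
  nlinarith [mul_pos hb2pos (sub_pos.2 hb21)]
end

section
/- Let c ≥ 2 and let z : Fin c → ℝ have a strict unique maximizer, i.e., there exists i₀ such that z j < z i₀ for all j ≠ i₀. For τ > 0, define the tempered softmax s(τ) i = exp(z i / τ) / ∑_k exp(z k / τ). Then the confidence at the maximizer is strictly decreasing in temperature: for all 0 < τ₁ < τ₂, s(τ₂) i₀ < s(τ₁) i₀. -/
/-- If `z` has a strict unique maximizer `i₀`, the tempered-softmax
confidence `s τ i₀ = exp (z i₀ / τ) / ∑ k, exp (z k / τ)` is strictly decreasing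
in the temperature `τ` on `(0, ∞)`. -/
theorem tempered_softmax_confidence_strictAnti (c : ℕ) (hc : 2 ≤ c) (z : Fin c → ℝ)
    (i₀ : Fin c) (hmax : ∀ j, j ≠ i₀ → z j < z i₀)
    (s : ℝ → Fin c → ℝ)
    (hs : ∀ τ i, s τ i = Real.exp (z i / τ) / ∑ k, Real.exp (z k / τ))
    (τ₁ τ₂ : ℝ) (h1 : 0 < τ₁) (h12 : τ₁ < τ₂) :
    s τ₂ i₀ < s τ₁ i₀ := by
  have h2 : (0:ℝ) < τ₂ := h1.trans h12
  set D : ℝ → ℝ := fun τ => ∑ k, Real.exp ((z k - z i₀) / τ) with hD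
  have hsD : ∀ τ, 0 < τ → s τ i₀ = 1 / D τ := by
    intro τ hτ
    rw [hs, hD]
    have : ∀ k : Fin c, Real.exp ((z k - z i₀) / τ)
        = Real.exp (z k / τ) * Real.exp (-(z i₀ / τ)) := by
      intro k
      rw [← Real.exp_add]
      ring_nf
    simp only [this, ← Finset.sum_mul]
    rw [Real.exp_neg]
    have hpos : 0 < ∑ k, Real.exp (z k / τ) :=
      Finset.sum_pos (fun k _ => Real.exp_pos _) ⟨i₀, Finset.mem_univ _⟩
    field_simp
  have hDpos : ∀ τ, 0 < D τ := fun τ =>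
    Finset.sum_pos (fun k _ => Real.exp_pos _) ⟨i₀, Finset.mem_univ _⟩
  have key : ∀ k, k ≠ i₀ → Real.exp ((z k - z i₀) / τ₁) < Real.exp ((z k - z i₀) / τ₂) := by
    intro k hk
    have ha : z k - z i₀ < 0 := sub_neg.mpr (hmax k hk)
    have : (z k - z i₀) / τ₁ < (z k - z i₀) / τ₂ := by
      rw [div_lt_div_iff₀ h1 h2]
      exact mul_lt_mul_of_neg_left h12 ha
    exact Real.exp_lt_exp.mpr this
  haveI : Nontrivial (Fin c) := Fin.nontrivial_iff_two_le.mpr hc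
  obtain ⟨j, hj⟩ := exists_ne i₀
  have hDlt : D τ₁ < D τ₂ := by
    apply Finset.sum_lt_sum
    · intro k _
      rcases eq_or_ne k i₀ with rfl | hk
      · simp
      · exact (key k hk).le
    · exact ⟨j, Finset.mem_univ _, key j hj⟩
  rw [hsD τ₁ h1, hsD τ₂ h2]
  exact one_div_lt_one_div_of_lt (hDpos τ₁) hDlt
end
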